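/- For |q|<1, one has ∑_{n≥0} (1/q;q²)_n (−1)^n q^n/(−q²;q²)_n = 2/(1+q). -/

import Mathlib

open scoped BigOperators

/-- The finite q-Pochhammer symbol `(a;q)_n = ∏_{j=0}^{n-1} (1 - a q^j)`. -/
noncomputable def qPoch (a q : ℂ) (n : ℕ) : ℂ := ∏ j ∈ Finset.range n, (1 - a * q ^ j)

noncomputable def Tq (q : ℂ) (n : ℕ) : ℂ :=
  qPoch (1 / q) (q ^ 2) n * (-1 : ℂ) ^ n * q ^ n / qPoch (-q ^ 2) (q ^ 2) n

noncomputable def Eq' (q : ℂ) : ℕ → ℂ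
  | 0 => -(2 / (1 + q))
  | n + 1 => Tq q n * ((q - (q ^ 2) ^ n) / (1 + q))

lemma aux_ne (q : ℂ) (hq : ‖q‖ < 1) (n : ℕ) : (1 : ℂ) + q ^ 2 * (q ^ 2) ^ n ≠ 0 := by
  intro h
  have hz : q ^ 2 * (q ^ 2) ^ n = -1 := by linear_combination h
  have : ‖q ^ 2 * (q ^ 2) ^ n‖ < 1 := by
    rw [norm_mul, norm_pow, norm_pow, norm_pow]
    calc ‖q‖ ^ 2 * (‖q‖ ^ 2) ^ n ≤ ‖q‖ ^ 2 * 1 := by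
          apply mul_le_mul_of_nonneg_left _ (by positivity)
          exact pow_le_one₀ (by positivity) (by nlinarith [norm_nonneg q])
      _ < 1 := by nlinarith [norm_nonneg q]
  rw [hz] at this
  simp at this

lemma den_ne (q : ℂ) (hq : ‖q‖ < 1) (n : ℕ) : qPoch (-q ^ 2) (q ^ 2) n ≠ 0 := by
  rw [qPoch, Finset.prod_ne_zero_iff]
  intro j _
  have := aux_ne q hq j
  intro h
  apply this
  linear_combination h

lemma qPoch_succ (a q : ℂ) (n : ℕ) :
    qPoch a q (n + 1) = qPoch a q n * (1 - a * q ^ n) := Finset.prod_range_succ _ _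

lemma Tq_step (q : ℂ) (hq0 : q ≠ 0) (hq : ‖q‖ < 1) (n : ℕ) :
    Tq q (n + 1) = Tq q n * (-((q - (q ^ 2) ^ n) / (1 + q ^ 2 * (q ^ 2) ^ n))) := by
  rw [Tq, Tq, qPoch_succ, qPoch_succ]
  have h1 := den_ne q hq n
  have h2 := aux_ne q hq n
  rw [show (1 : ℂ) - -q ^ 2 * (q ^ 2) ^ n = 1 + q ^ 2 * (q ^ 2) ^ n by ring]
  generalize (1 : ℂ) + q ^ 2 * (q ^ 2) ^ n = D at *
  field_simp
  ring

lemma Tq_summable (q : ℂ) (hq0 : q ≠ 0) (hq : ‖q‖ < 1) : Summable (Tq q) := by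
  set r := ‖q‖ with hr
  have hr0 : 0 ≤ r := norm_nonneg q
  have hs1 : r ^ 2 < 1 := by nlinarith
  have hs0 : 0 ≤ r ^ 2 := by positivity
  set ρ : ℝ := (1 + r) / 2 with hρ
  have hρ1 : ρ < 1 := by rw [hρ]; linarith
  have hrρ : r < ρ := by rw [hρ]; linarith
  apply summable_of_ratio_norm_eventually_le hρ1
  -- the bound sequence tends to r
  have htend : Filter.Tendsto (fun n : ℕ => (r + (r ^ 2) ^ n) / (1 - r ^ 2 * (r ^ 2) ^ n))
      Filter.atTop (nhds r) := by
    have hpow : Filter.Tendsto (fun n : ℕ => (r ^ 2) ^ n) Filter.atTop (nhds 0) :=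
      tendsto_pow_atTop_nhds_zero_of_lt_one hs0 hs1
    have h1 : Filter.Tendsto (fun n : ℕ => r + (r ^ 2) ^ n) Filter.atTop (nhds (r + 0)) :=
      tendsto_const_nhds.add hpow
    have h2 : Filter.Tendsto (fun n : ℕ => 1 - r ^ 2 * (r ^ 2) ^ n) Filter.atTop
        (nhds (1 - r ^ 2 * 0)) := tendsto_const_nhds.sub (tendsto_const_nhds.mul hpow)
    have := h1.div h2 (by norm_num)
    simpa [Pi.div_def] using this
  have hev : ∀ᶠ n : ℕ in Filter.atTop,
      (r + (r ^ 2) ^ n) / (1 - r ^ 2 * (r ^ 2) ^ n) < ρ :=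
    htend.eventually_lt_const hrρ
  filter_upwards [hev] with n hn
  rw [Tq_step q hq0 hq n, norm_mul, mul_comm ρ _]
  apply mul_le_mul_of_nonneg_left _ (norm_nonneg _)
  have hpw : (r ^ 2) ^ n ≤ 1 := pow_le_one₀ hs0 (le_of_lt hs1)
  have hden_pos : 0 < 1 - r ^ 2 * (r ^ 2) ^ n := by nlinarith
  have hnum : ‖q - (q ^ 2) ^ n‖ ≤ r + (r ^ 2) ^ n := by
    calc ‖q - (q ^ 2) ^ n‖ ≤ ‖q‖ + ‖(q ^ 2) ^ n‖ := norm_sub_le _ _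
      _ = r + (r ^ 2) ^ n := by rw [norm_pow, norm_pow]
  have hden : 1 - r ^ 2 * (r ^ 2) ^ n ≤ ‖1 + q ^ 2 * (q ^ 2) ^ n‖ := by
    have := norm_sub_norm_le (1 : ℂ) (-(q ^ 2 * (q ^ 2) ^ n))
    simp only [norm_neg, norm_one, sub_neg_eq_add] at this
    calc 1 - r ^ 2 * (r ^ 2) ^ n = 1 - ‖q ^ 2 * (q ^ 2) ^ n‖ := by
          rw [norm_mul, norm_pow, norm_pow, norm_pow]
      _ ≤ ‖1 + q ^ 2 * (q ^ 2) ^ n‖ := this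
  calc ‖-((q - (q ^ 2) ^ n) / (1 + q ^ 2 * (q ^ 2) ^ n))‖
      = ‖q - (q ^ 2) ^ n‖ / ‖1 + q ^ 2 * (q ^ 2) ^ n‖ := by rw [norm_neg, norm_div]
    _ ≤ (r + (r ^ 2) ^ n) / (1 - r ^ 2 * (r ^ 2) ^ n) := by
        apply div_le_div₀ (by positivity) hnum hden_pos hden
    _ ≤ ρ := le_of_lt hn

lemma partial_sum_eq (q : ℂ) (hq0 : q ≠ 0) (hq : ‖q‖ < 1) (hq1 : (1 : ℂ) + q ≠ 0) (N : ℕ) :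
    ∑ n ∈ Finset.range N, Tq q n = 2 / (1 + q) + Eq' q N := by
  induction N with
  | zero => simp [Eq']
  | succ N ih =>
    rw [Finset.sum_range_succ, ih]
    have key : Eq' q (N + 1) = Eq' q N + Tq q N := by
      cases N with
      | zero =>
        have ht0 : Tq q 0 = 1 := by simp [Tq, qPoch]
        simp only [Eq', ht0]
        field_simp
        ring
      | succ n =>
        simp only [Eq']
        rw [Tq_step q hq0 hq n]
        have h2 := aux_ne q hq n
        field_simp
        ring
    rw [key]; ring

theorem stmt_12 (q : ℂ) (hq0 : q ≠ 0) (hq : ‖q‖ < 1) (hqm1 : q ≠ -1) :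
    ∑' n : ℕ, qPoch (1 / q) (q ^ 2) n * (-1 : ℂ) ^ n * q ^ n / qPoch (-q ^ 2) (q ^ 2) n
      = 2 / (1 + q) := by
  have hq1 : (1 : ℂ) + q ≠ 0 := by
    intro h; apply hqm1; linear_combination h
  have hsum : Summable (Tq q) := Tq_summable q hq0 hq
  obtain ⟨L, hL⟩ := id hsum
  have htendL : Filter.Tendsto (fun N => ∑ n ∈ Finset.range N, Tq q n) Filter.atTop (nhds L) :=
    hL.tendsto_sum_nat
  -- E tends to 0
  have hE : Filter.Tendsto (fun N => Eq' q N) Filter.atTop (nhds 0) := by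
    have hT0 : Filter.Tendsto (Tq q) Filter.atTop (nhds 0) := hsum.tendsto_atTop_zero
    have hpow : Filter.Tendsto (fun n : ℕ => (q ^ 2) ^ n) Filter.atTop (nhds 0) := by
      apply tendsto_pow_atTop_nhds_zero_of_norm_lt_one
      rw [norm_pow]; nlinarith [norm_nonneg q]
    have hfac : Filter.Tendsto (fun n : ℕ => (q - (q ^ 2) ^ n) / (1 + q))
        Filter.atTop (nhds ((q - 0) / (1 + q))) :=
      (tendsto_const_nhds.sub hpow).div_const _
    have hmul : Filter.Tendsto (fun n : ℕ => Tq q n * ((q - (q ^ 2) ^ n) / (1 + q)))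
        Filter.atTop (nhds (0 * ((q - 0) / (1 + q)))) := hT0.mul hfac
    rw [zero_mul] at hmul
    have : Filter.Tendsto (fun n : ℕ => Eq' q (n + 1)) Filter.atTop (nhds 0) := hmul
    exact (Filter.tendsto_add_atTop_iff_nat 1).mp this
  have htend2 : Filter.Tendsto (fun N => ∑ n ∈ Finset.range N, Tq q n) Filter.atTop
      (nhds (2 / (1 + q) + 0)) := by
    have : (fun N => ∑ n ∈ Finset.range N, Tq q n) = fun N => 2 / (1 + q) + Eq' q N := by
      funext N; exact partial_sum_eq q hq0 hq hq1 N
    rw [this]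
    exact tendsto_const_nhds.add hE
  rw [add_zero] at htend2
  have hLeq : L = 2 / (1 + q) := tendsto_nhds_unique htendL htend2
  rw [hLeq] at hL
  exact hL.tsum_eq
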